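/- Let D be a p×p diagonal real matrix and Σ a p×p positive semidefinite matrix with rank(Σ) ≥ p − 1, and set Γ = DΣ. If Γ is neither positive semidefinite nor negative semidefinite (as a quadratic form, i.e., z'Γz takes both signs), then for every δ > 0 there exist a vector z ∈ ℝ^p and diagonal p×p matrices H₁, H₂ such that ‖z‖ < δ, ‖D − H₁‖ < δ, ‖D − H₂‖ < δ, z'(H₁Σ)z > 0, and z'(H₂Σ)z < 0. -/

import Mathlib

open Matrix

attribute [local instance] Matrix.frobeniusNormedAddCommGroup
attribute [local instance] Matrix.frobeniusNormedSpace

namespace PerturbAux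

variable {p : ℕ}

noncomputable def q (M : Matrix (Fin p) (Fin p) ℝ) (z : Fin p → ℝ) : ℝ := z ⬝ᵥ M *ᵥ z

lemma q_smul (M : Matrix (Fin p) (Fin p) ℝ) (c : ℝ) (v : Fin p → ℝ) :
    q M (c • v) = c ^ 2 * q M v := by
  simp [q, Matrix.mulVec_smul, smul_dotProduct, dotProduct_smul, smul_eq_mul]
  ring

lemma q_cont (M : Matrix (Fin p) (Fin p) ℝ) (x y : Fin p → ℝ) :
    Continuous fun t : ℝ => q M (x + t • y) := by
  simp only [q, dotProduct, mulVec, Pi.add_apply, Pi.smul_apply, smul_eq_mul]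
  fun_prop

end PerturbAux

namespace PerturbAux

/-- If the quadratic form of `M` takes both signs, a root on the segment. -/
lemma seg_root (M : Matrix (Fin p) (Fin p) ℝ) {x y : Fin p → ℝ}
    (hx : 0 < q M x) (hy : q M y < 0) :
    ∃ t : ℝ, 0 < t ∧ t < 1 ∧ q M ((1 - t) • y + t • x) = 0 := by
  have hc := q_cont M y (x - y)
  have h0 : q M (y + (0:ℝ) • (x - y)) = q M y := by simp
  have h1 : q M (y + (1:ℝ) • (x - y)) = q M x := by
    congr 1; simp
  obtain ⟨t, ht, hqt⟩ := intermediate_value_Icc (by norm_num : (0:ℝ) ≤ 1)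
    (hc.continuousOn) (by rw [h0, h1]; exact ⟨le_of_lt hy, le_of_lt hx⟩ :
      (0:ℝ) ∈ Set.Icc (q M (y + (0:ℝ) • (x - y))) (q M (y + (1:ℝ) • (x - y))))
  refine ⟨t, ?_, ?_, ?_⟩
  · rcases eq_or_lt_of_le ht.1 with h | h
    · exfalso; rw [← h] at hqt; simp only [h0] at hqt; linarith
    · exact h
  · rcases eq_or_lt_of_le ht.2 with h | h
    · exfalso; rw [h] at hqt; simp only [h1] at hqt; linarith
    · exact h
  · rw [← hqt]; congr 1
    ext i; simp [Pi.add_apply, Pi.smul_apply, Pi.sub_apply]; ring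

end PerturbAux

namespace PerturbAux

lemma pair_indep {M : Matrix (Fin p) (Fin p) ℝ} {x y : Fin p → ℝ}
    (hx : 0 < q M x) (hy : q M y < 0) :
    ∀ a b : ℝ, a • x + b • y = 0 → a = 0 ∧ b = 0 := by
  intro a b hab
  have hy0 : y ≠ 0 := by
    intro h; rw [h] at hy; simp [q] at hy
  by_cases ha : a = 0
  · subst ha
    simp only [zero_smul, zero_add, smul_eq_zero] at hab
    exact ⟨rfl, hab.resolve_right hy0⟩
  · exfalso
    have hxe : x = (-b / a) • y := by
      have h2 : a • x = (-b) • y := by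
        rw [neg_smul]; linear_combination (norm := module) hab
      have h3 := congrArg (fun v => a⁻¹ • v) h2
      simpa [smul_smul, inv_mul_cancel₀ ha, div_eq_inv_mul, mul_comm] using h3
    rw [hxe, q_smul] at hx
    nlinarith [sq_nonneg (-b / a)]

lemma exists_null_vector (D S : Matrix (Fin p) (Fin p) ℝ)
    (hpsd : S.PosSemidef) (hrank : p - 1 ≤ S.rank)
    {x y : Fin p → ℝ} (hx : 0 < q (D * S) x) (hy : q (D * S) y < 0) :
    ∃ z : Fin p → ℝ, q (D * S) z = 0 ∧ 0 < q S z := by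
  have hindep := pair_indep hx hy
  have key : ∀ w : Fin p → ℝ, q (D * S) w = 0 → S *ᵥ w ≠ 0 →
      ∃ z, q (D * S) z = 0 ∧ 0 < q S z := by
    intro w hw hSw
    refine ⟨w, hw, ?_⟩
    have h1 : 0 ≤ q S w := by simpa [q] using hpsd.dotProduct_mulVec_nonneg w
    rcases eq_or_lt_of_le h1 with h | h
    · exact absurd ((hpsd.dotProduct_mulVec_zero_iff w).mp (by simpa [q] using h.symm)) hSw
    · exact h
  obtain ⟨t₁, ht₁0, ht₁1, hw₁⟩ := seg_root (D * S) hx hy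
  set w₁ : Fin p → ℝ := (1 - t₁) • y + t₁ • x with hw₁def
  have hyneg : q (D * S) (-y) < 0 := by
    have h4 := q_smul (D * S) (-1) y
    simp only [neg_smul, one_smul] at h4
    rw [h4]; nlinarith
  obtain ⟨t₂, ht₂0, ht₂1, hw₂'⟩ := seg_root (D * S) hx hyneg
  set w₂ : Fin p → ℝ := (1 - t₂) • (-y) + t₂ • x with hw₂def
  by_cases hS₁ : S *ᵥ w₁ ≠ 0
  · exact key w₁ hw₁ hS₁
  by_cases hS₂ : S *ᵥ w₂ ≠ 0
  · exact key w₂ hw₂' hS₂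
  exfalso
  push_neg at hS₁ hS₂
  have hw₁0 : w₁ ≠ 0 := by
    intro h
    obtain ⟨h1, h2⟩ := hindep t₁ (1 - t₁) (by rw [← h, hw₁def]; abel)
    linarith
  have hw₂0 : w₂ ≠ 0 := by
    intro h
    obtain ⟨h1, h2⟩ := hindep t₂ (-(1 - t₂)) (by rw [← h, hw₂def]; module)
    linarith
  have hker : Module.finrank ℝ ↥(LinearMap.ker S.mulVecLin) ≤ 1 := by
    have h := LinearMap.finrank_range_add_finrank_ker S.mulVecLin
    have hp : Module.finrank ℝ (Fin p → ℝ) = p := by simp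
    rw [hp] at h
    have hr : S.rank = Module.finrank ℝ ↥(LinearMap.range S.mulVecLin) := rfl
    omega
  have hmem₁ : w₁ ∈ LinearMap.ker S.mulVecLin := by
    rw [LinearMap.mem_ker, Matrix.mulVecLin_apply]; exact hS₁
  have hmem₂ : w₂ ∈ LinearMap.ker S.mulVecLin := by
    rw [LinearMap.mem_ker, Matrix.mulVecLin_apply]; exact hS₂
  have hspan : (ℝ ∙ w₁) = LinearMap.ker S.mulVecLin := by
    apply Submodule.eq_of_le_of_finrank_le
    · rwa [Submodule.span_singleton_le_iff_mem]
    · rw [finrank_span_singleton hw₁0]; exact hker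
  have hmem : w₂ ∈ (ℝ ∙ w₁) := hspan ▸ hmem₂
  obtain ⟨c, hc⟩ := Submodule.mem_span_singleton.mp hmem
  have hcomb : (c * t₁ - t₂) • x + (c * (1 - t₁) + (1 - t₂)) • y = 0 := by
    rw [hw₁def, hw₂def] at hc
    linear_combination (norm := module) hc
  obtain ⟨h1, h2⟩ := hindep _ _ hcomb
  nlinarith

end PerturbAux

theorem diagonal_perturbation_lemma (p : ℕ) (D S : Matrix (Fin p) (Fin p) ℝ)
    (hD : D.IsDiag) (hpsd : S.PosSemidef) (hrank : p - 1 ≤ S.rank)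
    (hnotpsd : ¬ ∀ z : Fin p → ℝ, 0 ≤ z ⬝ᵥ (D * S) *ᵥ z)
    (hnotnsd : ¬ ∀ z : Fin p → ℝ, z ⬝ᵥ (D * S) *ᵥ z ≤ 0) :
    ∀ δ : ℝ, 0 < δ →
      ∃ (z : Fin p → ℝ) (H₁ H₂ : Matrix (Fin p) (Fin p) ℝ),
        H₁.IsDiag ∧ H₂.IsDiag ∧ ‖z‖ < δ ∧ ‖D - H₁‖ < δ ∧ ‖D - H₂‖ < δ ∧
        0 < z ⬝ᵥ (H₁ * S) *ᵥ z ∧ z ⬝ᵥ (H₂ * S) *ᵥ z < 0 := by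
  push_neg at hnotpsd hnotnsd
  obtain ⟨y, hy⟩ := hnotpsd
  obtain ⟨x, hx⟩ := hnotnsd
  obtain ⟨z₀, hz₀q, hz₀S⟩ := PerturbAux.exists_null_vector D S hpsd hrank
    (x := x) (y := y) hx hy
  intro δ hδ
  have hz₀0 : z₀ ≠ 0 := by
    intro h; rw [h] at hz₀S; simp [PerturbAux.q] at hz₀S
  have hnz : 0 < ‖z₀‖ := norm_pos_iff.mpr hz₀0
  set c : ℝ := δ / (2 * ‖z₀‖) with hc
  have hcpos : 0 < c := div_pos hδ (by linarith)
  set ε : ℝ := δ / (2 * (‖(1 : Matrix (Fin p) (Fin p) ℝ)‖ + 1)) with hε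
  have hone : (0:ℝ) ≤ ‖(1 : Matrix (Fin p) (Fin p) ℝ)‖ := norm_nonneg _
  have hεpos : 0 < ε := div_pos hδ (by linarith)
  refine ⟨c • z₀, D + ε • 1, D - ε • 1, ?_, ?_, ?_, ?_, ?_, ?_, ?_⟩
  · exact hD.add ((Matrix.isDiag_one).smul ε)
  · exact hD.sub ((Matrix.isDiag_one).smul ε)
  · rw [norm_smul, Real.norm_eq_abs, abs_of_pos hcpos, hc]
    rw [div_mul_eq_mul_div, div_lt_iff₀ (by linarith)]
    nlinarith
  · have h1 : D - (D + ε • 1) = (-ε) • (1 : Matrix (Fin p) (Fin p) ℝ) := by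
      rw [neg_smul]; abel
    rw [h1, norm_smul, Real.norm_eq_abs, abs_neg, abs_of_pos hεpos, hε]
    rw [div_mul_eq_mul_div, div_lt_iff₀ (by linarith)]
    nlinarith
  · have h1 : D - (D - ε • 1) = ε • (1 : Matrix (Fin p) (Fin p) ℝ) := by abel
    rw [h1, norm_smul, Real.norm_eq_abs, abs_of_pos hεpos, hε]
    rw [div_mul_eq_mul_div, div_lt_iff₀ (by linarith)]
    nlinarith
  · have hexp : (c • z₀) ⬝ᵥ ((D + ε • 1) * S) *ᵥ (c • z₀)
        = c ^ 2 * (PerturbAux.q (D * S) z₀) + ε * (c ^ 2 * PerturbAux.q S z₀) := by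
      rw [add_mul, Matrix.smul_mul, one_mul, Matrix.add_mulVec, Matrix.smul_mulVec,
        dotProduct_add, dotProduct_smul]
      have e1 := PerturbAux.q_smul (D * S) c z₀
      have e2 := PerturbAux.q_smul S c z₀
      simp only [PerturbAux.q] at e1 e2
      rw [smul_eq_mul, e1, e2]; rfl
    rw [hexp, hz₀q]
    have : 0 < c ^ 2 * PerturbAux.q S z₀ := by positivity
    nlinarith
  · have hexp : (c • z₀) ⬝ᵥ ((D - ε • 1) * S) *ᵥ (c • z₀)
        = c ^ 2 * (PerturbAux.q (D * S) z₀) - ε * (c ^ 2 * PerturbAux.q S z₀) := by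
      rw [sub_mul, Matrix.smul_mul, one_mul, Matrix.sub_mulVec, Matrix.smul_mulVec,
        dotProduct_sub, dotProduct_smul]
      have e1 := PerturbAux.q_smul (D * S) c z₀
      have e2 := PerturbAux.q_smul S c z₀
      simp only [PerturbAux.q] at e1 e2
      rw [smul_eq_mul, e1, e2]; rfl
    rw [hexp, hz₀q]
    have : 0 < c ^ 2 * PerturbAux.q S z₀ := by positivity
    nlinarith
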